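/- Let κ be an inaccessible cardinal and let D be a κ-complete uniform ultrafilter on κ. Suppose there is a family ⟨X_δ : δ < κ⁺⟩ of members of D such that for every B ∈ D there exists δ < κ⁺ with |X_δ ∖ B| < κ. Then the minimum cardinality of a filter base for D is exactly κ⁺: D has a filter base of cardinality κ⁺, and no filter base for D has cardinality at most κ. -/

import Mathlib

open Cardinal

theorem no_small_base_aux {α : Type u} (hinf : ℵ₀ ≤ #α)
    (D : Ultrafilter α) (huniform : ∀ A ∈ D, #A = #α)
    (𝔅 : Set (Set α)) (hmem : ∀ Y ∈ 𝔅, Y ∈ D)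
    (hbase : ∀ B ∈ D, ∃ Y ∈ 𝔅, Y ⊆ B)
    (hcard : #𝔅 ≤ #α) : False := by
  classical
  obtain ⟨r, wo, hr⟩ := Cardinal.ord_eq ↥𝔅
  haveI := wo
  have hseg : ∀ b : ↥𝔅, #{b' // r b' b} < #α := by
    intro b
    rw [← Ordinal.card_typein]
    exact (Cardinal.card_typein_lt (r := r) b hr).trans_le hcard
  have key : ∀ (b : ↥𝔅) (ih : ∀ b', r b' b → α × α),
      ∃ p : α × α, p.1 ∈ (b : Set α) ∧ p.2 ∈ (b : Set α) ∧ p.1 ≠ p.2 ∧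
        ∀ (b' : ↥𝔅) (h : r b' b),
          p.1 ≠ (ih b' h).1 ∧ p.1 ≠ (ih b' h).2 ∧ p.2 ≠ (ih b' h).1 ∧ p.2 ≠ (ih b' h).2 := by
    intro b ih
    set U : Set α := Set.range (fun q : {b' // r b' b} => (ih q.1 q.2).1) ∪
        Set.range (fun q : {b' // r b' b} => (ih q.1 q.2).2) with hU
    have hUcard : #U < #α := by
      apply lt_of_le_of_lt (Cardinal.mk_union_le _ _)
      exact Cardinal.add_lt_of_lt hinf
        ((Cardinal.mk_range_le).trans_lt (hseg b)) ((Cardinal.mk_range_le).trans_lt (hseg b))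
    have hb : #(b : Set α) = #α := huniform b (hmem b b.2)
    have hnt : ((b : Set α) \ U).Nontrivial := by
      by_contra hcon
      rw [Set.not_nontrivial_iff] at hcon
      have h1 : #↥((b : Set α) \ U) ≤ 1 := Cardinal.mk_le_one_iff_set_subsingleton.mpr hcon
      have h2 : (b : Set α) ⊆ ((b : Set α) \ U) ∪ U := fun x hx => by
        by_cases hxU : x ∈ U
        · exact Or.inr hxU
        · exact Or.inl ⟨hx, hxU⟩
      have h3 : #(b : Set α) ≤ #(((b : Set α) \ U) ∪ U : Set α) :=
        Cardinal.mk_le_mk_of_subset h2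
      have h5 : #(b : Set α) < #α :=
        (h3.trans (Cardinal.mk_union_le _ _)).trans_lt
          (Cardinal.add_lt_of_lt hinf (h1.trans_lt (Cardinal.one_lt_aleph0.trans_le hinf))
            hUcard)
      exact h5.ne hb
    obtain ⟨x, hx, y, hy, hxy⟩ := hnt
    refine ⟨(x, y), hx.1, hy.1, hxy, ?_⟩
    intro b' h
    have hx1 := hx.2
    have hy1 := hy.2
    rw [hU, Set.mem_union, not_or] at hx1 hy1
    exact ⟨fun he => hx1.1 (Set.mem_range.mpr ⟨⟨b', h⟩, he.symm⟩),
      fun he => hx1.2 (Set.mem_range.mpr ⟨⟨b', h⟩, he.symm⟩),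
      fun he => hy1.1 (Set.mem_range.mpr ⟨⟨b', h⟩, he.symm⟩),
      fun he => hy1.2 (Set.mem_range.mpr ⟨⟨b', h⟩, he.symm⟩)⟩
  have wf : WellFounded r := IsWellFounded.wf
  let f : ↥𝔅 → α × α := wf.fix (fun b ih => Classical.choose (key b ih))
  have hfeq : ∀ b, f b = Classical.choose (key b (fun b' _ => f b')) := fun b =>
    wf.fix_eq _ b
  have hspec : ∀ b : ↥𝔅, (f b).1 ∈ (b : Set α) ∧ (f b).2 ∈ (b : Set α) ∧
      (f b).1 ≠ (f b).2 ∧ ∀ (b' : ↥𝔅) (h : r b' b),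
        (f b).1 ≠ (f b').1 ∧ (f b).1 ≠ (f b').2 ∧ (f b).2 ≠ (f b').1 ∧ (f b).2 ≠ (f b').2 := by
    intro b
    rw [hfeq b]
    exact Classical.choose_spec (key b (fun b' _ => f b'))
  set E : Set α := Set.range (fun b => (f b).1) with hE
  set F : Set α := Set.range (fun b => (f b).2) with hF
  have hEF : E ∩ F = ∅ := by
    ext x
    simp only [Set.mem_inter_iff, Set.mem_empty_iff_false, iff_false, not_and]
    rintro ⟨b, rfl⟩ ⟨b', hb'⟩
    rcases trichotomous_of r b b' with h | h | h
    · exact ((hspec b').2.2.2 b h).2.2.1 hb'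
    · subst h
      exact (hspec b).2.2.1 hb'.symm
    · exact (((hspec b).2.2.2 b' h).2.1 hb'.symm)
  by_cases hED : E ∈ D
  · have hFD : Fᶜ ∈ D := by
      rw [Ultrafilter.compl_mem_iff_notMem]
      intro hFm
      have h2 : E ∩ F ∈ D := Filter.inter_mem hED hFm
      rw [hEF] at h2
      exact Ultrafilter.empty_notMem h2
    obtain ⟨Y, hY, hYF⟩ := hbase _ hFD
    exact hYF (hspec ⟨Y, hY⟩).2.1 ⟨⟨Y, hY⟩, rfl⟩
  · have hED' : Eᶜ ∈ D := (Ultrafilter.compl_mem_iff_notMem).mpr hED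
    obtain ⟨Y, hY, hYE⟩ := hbase _ hED'
    exact hYE (hspec ⟨Y, hY⟩).1 ⟨⟨Y, hY⟩, rfl⟩

/-- Let `κ` (here the cardinality of the type `α`) be an
inaccessible cardinal and let `D` be a `κ`-complete uniform ultrafilter on `κ`.
Suppose there is a family `⟨X δ : δ < κ⁺⟩` of members of `D` (indexed by a type
`ι` of cardinality `κ⁺`) such that for every `B ∈ D` there exists `δ` with
`|X δ \ B| < κ`.  Then the minimum cardinality of a filter base for `D` is
exactly `κ⁺`: `D` has a filter base of cardinality `κ⁺`, and no filter base
for `D` has cardinality at most `κ`. -/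
theorem ultrafilter_base_number_eq_succ {α : Type u} {ι : Type u}
    (hinacc : (#α).IsInaccessible)
    (D : Ultrafilter α)
    (hcomplete : ∀ S : Set (Set α), #S < #α → (∀ A ∈ S, A ∈ D) → ⋂₀ S ∈ D)
    (huniform : ∀ A ∈ D, #A = #α)
    (X : ι → Set α) (hι : #ι = Order.succ (#α))
    (hX : ∀ δ, X δ ∈ D)
    (hcapture : ∀ B ∈ D, ∃ δ, #↥(X δ \ B) < #α) :
    (∃ 𝔅 : Set (Set α), (∀ Y ∈ 𝔅, Y ∈ D) ∧ (∀ B ∈ D, ∃ Y ∈ 𝔅, Y ⊆ B) ∧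
        #𝔅 = Order.succ (#α)) ∧
      ∀ 𝔅 : Set (Set α), (∀ Y ∈ 𝔅, Y ∈ D) → (∀ B ∈ D, ∃ Y ∈ 𝔅, Y ⊆ B) →
        ¬ #𝔅 ≤ #α := by
  have hinf : ℵ₀ ≤ #α := hinacc.1.le
  constructor
  · set 𝔅 : Set (Set α) := {Z | ∃ δ : ι, ∃ S : Set α, #↥S < #α ∧ Z = X δ \ S} with h𝔅def
    have hmem𝔅 : ∀ Z ∈ 𝔅, Z ∈ D := by
      rintro Z ⟨δ, S, hS, rfl⟩
      have hSD : S ∉ D := fun h => hS.ne (huniform S h)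
      have h1 : Sᶜ ∈ D := (Ultrafilter.compl_mem_iff_notMem).mpr hSD
      have h2 : X δ ∩ Sᶜ ∈ D := Filter.inter_mem (hX δ) h1
      rwa [Set.diff_eq]
    have hbase𝔅 : ∀ B ∈ D, ∃ Y ∈ 𝔅, Y ⊆ B := by
      intro B hB
      obtain ⟨δ, hδ⟩ := hcapture B hB
      refine ⟨X δ \ (X δ \ B), ⟨δ, _, hδ, rfl⟩, ?_⟩
      rintro x ⟨hx1, hx2⟩
      by_contra hxB
      exact hx2 ⟨hx1, hxB⟩
    refine ⟨𝔅, hmem𝔅, hbase𝔅, ?_⟩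
    have hsmall : #{S : Set α // #↥S < #α} = #α := by
      have h := Cardinal.mk_subset_mk_lt_cof (α := α) hinacc.isStrongPrelimit
      rwa [hinacc.isRegular.cof_eq] at h
    have h𝔅eq : 𝔅 = Set.range (fun p : ι × {S : Set α // #↥S < #α} => X p.1 \ p.2.1) := by
      ext Z
      constructor
      · rintro ⟨δ, S, hS, rfl⟩
        exact ⟨(δ, ⟨S, hS⟩), rfl⟩
      · rintro ⟨⟨δ, S⟩, rfl⟩
        exact ⟨δ, S.1, S.2, rfl⟩
    have hle : #𝔅 ≤ Order.succ (#α) := by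
      rw [h𝔅eq]
      refine (Cardinal.mk_range_le).trans ?_
      rw [Cardinal.mk_prod, Cardinal.lift_id, Cardinal.lift_id, hι, hsmall,
        Cardinal.mul_eq_max (hinf.trans (Order.le_succ _)) hinf, max_le_iff]
      exact ⟨le_rfl, Order.le_succ _⟩
    have hge : Order.succ (#α) ≤ #𝔅 :=
      Order.succ_le_of_lt (lt_of_not_ge fun h =>
        no_small_base_aux hinf D huniform 𝔅 hmem𝔅 hbase𝔅 h)
    exact le_antisymm hle hge
  · exact fun 𝔅 h1 h2 h3 => no_small_base_aux hinf D huniform 𝔅 h1 h2 h3
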